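/- Let A be a finite left brace whose multiplicative group (A,∘) is nilpotent and suppose |A| = p_1^{n_1}⋯p_m^{n_m} with p_1, …, p_m distinct primes. Then each p_i-Sylow subgroup A_{p_i} of the additive group (A,+) is a sub-left-brace of A, and A is isomorphic as a left brace to the direct product A_{p_1} × ⋯ × A_{p_m}. -/

import Mathlib

set_option linter.unusedSectionVars false
set_option maxHeartbeats 1000000


/-- A left brace structure on a type carrying an abelian additive group structure `+`
and a (multiplicative) group structure `∘` (written `*`). -/
class LeftBrace (A : Type*) [AddCommGroup A] [Group A] : Prop where
  compat : ∀ a b c : A, a * (b + c) + a = a * b + a * c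

section Brace

variable {A : Type*} [AddCommGroup A] [Group A]

/-- The map `λ_a : b ↦ -a + a ∘ b`, as a permutation of `A`. -/
def lam (a : A) : Equiv.Perm A where
  toFun b := -a + a * b
  invFun b := a⁻¹ * (a + b)
  left_inv b := by simp
  right_inv b := by simp

/-- A subset of a left brace is a sub-left-brace if it is simultaneously (the carrier of)
a subgroup of `(A,+)` and a subgroup of `(A,∘)`. -/
def IsSubBrace (B : Set A) : Prop :=
  ∃ (Sa : AddSubgroup A) (Sm : Subgroup A), (Sa : Set A) = B ∧ (Sm : Set A) = B

/-- `A(x)`: the smallest sub-left-brace containing `x`. -/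
def braceClosure (x : A) : Set A := ⋂₀ {B : Set A | IsSubBrace B ∧ x ∈ B}

end Brace

/-- The socle series of a left brace: `Soc_0 = {0}`,
`Soc_{n+1} = {a | ∀ b, a + b - a∘b ∈ Soc_n}`. -/
def socSeq (A : Type*) [AddCommGroup A] [Group A] : ℕ → Set A
  | 0 => {0}
  | n + 1 => {a | ∀ b, a + b - a * b ∈ socSeq A n}

/-- A left brace has multipermutation level `n` if `n` is minimal with `Soc_n(A) = A`. -/
def BraceMPL (A : Type*) [AddCommGroup A] [Group A] (n : ℕ) : Prop :=
  socSeq A n = Set.univ ∧ ∀ m < n, socSeq A m ≠ Set.univ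

/-- The `q`-primary component of the additive group of `A`; for a finite abelian group
this is the (unique) `q`-Sylow subgroup of `(A,+)`. -/
def primaryComponent (A : Type*) [AddCommGroup A] (q : ℕ) : Set A :=
  {a : A | ∃ k : ℕ, q ^ k • a = 0}

/-! ### Auxiliary development -/

section Basics
variable {A : Type*} [AddCommGroup A] [Group A] [LeftBrace A]

lemma LB.one_eq_zero : (1 : A) = 0 := by
  have h := LeftBrace.compat (1:A) 0 0
  simpa using h

lemma LB.mul_add (a b c : A) : a * (b + c) = a * b + a * c - a := by
  have h := LeftBrace.compat a b c
  have : a * (b + c) + a - a = a * b + a * c - a := by rw [h]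
  simpa using this

lemma LB.mul_zero (a : A) : a * 0 = a := by
  rw [← LB.one_eq_zero, mul_one]

lemma LB.mul_neg (a b : A) : a * (-b) = a + a - a * b := by
  have h := LB.mul_add a b (-b)
  rw [add_neg_cancel, LB.mul_zero] at h
  have := h.symm
  abel_nf
  abel_nf at this
  linear_combination (norm := abel) this

/-- λ_a as an additive automorphism. -/
def lamE (a : A) : A ≃+ A where
  toFun b := -a + a * b
  invFun b := a⁻¹ * (a + b)
  left_inv b := by simp
  right_inv b := by simp
  map_add' b c := by
    show -a + a * (b + c) = (-a + a * b) + (-a + a * c)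
    rw [LB.mul_add]; abel

lemma lamE_apply (a b : A) : lamE a b = -a + a * b := rfl

lemma mul_eq_add_lamE (a b : A) : a * b = a + lamE a b := by
  rw [lamE_apply]; abel

lemma lamE_mul (a b c : A) : lamE (a * b) c = lamE a (lamE b c) := by
  rw [lamE_apply, lamE_apply, lamE_apply, LB.mul_add, LB.mul_neg, ← mul_assoc]
  abel

end Basics

section Comp
variable {A : Type*} [AddCommGroup A]

lemma mem_comp_zero (q : ℕ) : (0 : A) ∈ primaryComponent A q := ⟨0, by simp⟩

lemma mem_comp_add {q : ℕ} {a b : A} (ha : a ∈ primaryComponent A q)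
    (hb : b ∈ primaryComponent A q) : a + b ∈ primaryComponent A q := by
  obtain ⟨k, hk⟩ := ha
  obtain ⟨l, hl⟩ := hb
  refine ⟨k + l, ?_⟩
  have h1 : q ^ (k + l) • a = 0 := by rw [pow_add, mul_comm, mul_smul, hk, smul_zero]
  have h2 : q ^ (k + l) • b = 0 := by rw [pow_add, mul_smul, hl, smul_zero]
  rw [smul_add, h1, h2, add_zero]

lemma mem_comp_neg {q : ℕ} {a : A} (ha : a ∈ primaryComponent A q) :
    -a ∈ primaryComponent A q := by
  obtain ⟨k, hk⟩ := ha
  exact ⟨k, by rw [smul_neg, hk, neg_zero]⟩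

lemma mem_comp_zsmul {q : ℕ} {a : A} (ha : a ∈ primaryComponent A q) (c : ℤ) :
    c • a ∈ primaryComponent A q := by
  obtain ⟨k, hk⟩ := ha
  exact ⟨k, by rw [smul_comm, hk, smul_zero]⟩

lemma mem_comp_map {q : ℕ} {a : A} (f : A ≃+ A) (ha : a ∈ primaryComponent A q) :
    f a ∈ primaryComponent A q := by
  obtain ⟨k, hk⟩ := ha
  exact ⟨k, by rw [← map_nsmul, hk, map_zero]⟩

lemma mem_comp_sub {q : ℕ} {a b : A} (ha : a ∈ primaryComponent A q)
    (hb : b ∈ primaryComponent A q) : a - b ∈ primaryComponent A q := by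
  rw [sub_eq_add_neg]; exact mem_comp_add ha (mem_comp_neg hb)

def compAdd (A : Type*) [AddCommGroup A] (q : ℕ) : AddSubgroup A where
  carrier := primaryComponent A q
  zero_mem' := mem_comp_zero q
  add_mem' := fun h h' => mem_comp_add h h'
  neg_mem' := fun h => mem_comp_neg h

lemma compAdd_mem_iff (A : Type*) [AddCommGroup A] (q : ℕ) (a : A) :
    a ∈ compAdd A q ↔ a ∈ primaryComponent A q := Iff.rfl

end Comp

section CompMul
variable {A : Type*} [AddCommGroup A] [Group A] [LeftBrace A]

def compMul (A : Type*) [AddCommGroup A] [Group A] [LeftBrace A] (q : ℕ) : Subgroup A where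
  carrier := primaryComponent A q
  one_mem' := by
    show (1 : A) ∈ primaryComponent A q
    rw [LB.one_eq_zero]; exact mem_comp_zero q
  mul_mem' := by
    intro a b ha hb
    show a * b ∈ primaryComponent A q
    rw [mul_eq_add_lamE]
    exact mem_comp_add ha (mem_comp_map (lamE a) hb)
  inv_mem' := by
    intro a ha
    show a⁻¹ ∈ primaryComponent A q
    have h : a⁻¹ = (lamE a).symm (-a) := by
      have : (lamE a).symm (-a) = a⁻¹ * (a + -a) := rfl
      rw [this, add_neg_cancel, ← LB.one_eq_zero, mul_one]
    rw [h]
    exact mem_comp_map ((lamE a).symm) (mem_comp_neg ha)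

end CompMul

section Tors
variable {A : Type} [Fintype A] [AddCommGroup A]
variable {m : ℕ} {p n : Fin m → ℕ} (hp : ∀ i, (p i).Prime) (hdist : Function.Injective p)
  (hcard : Fintype.card A = ∏ i, p i ^ n i)

include hp hdist hcard in
lemma comp_tors {i : Fin m} {a : A} (ha : a ∈ primaryComponent A (p i)) :
    p i ^ n i • a = 0 := by
  obtain ⟨k, hk⟩ := ha
  have h1 : addOrderOf a ∣ p i ^ k := addOrderOf_dvd_of_nsmul_eq_zero hk
  have h2 : addOrderOf a ∣ Fintype.card A := addOrderOf_dvd_card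
  obtain ⟨l, hl, hal⟩ := (Nat.dvd_prime_pow (hp i)).mp h1
  rw [hcard, ← Finset.mul_prod_erase Finset.univ _ (Finset.mem_univ i), hal] at h2
  have hcop : Nat.Coprime (p i ^ l) (∏ j ∈ Finset.univ.erase i, p j ^ n j) := by
    apply Nat.Coprime.pow_left
    apply Nat.Coprime.prod_right
    intro j hj
    apply Nat.Coprime.pow_right
    exact (Nat.coprime_primes (hp i) (hp j)).mpr
      (fun e => (Finset.mem_erase.mp hj).1 (hdist e).symm)
  have h3 : p i ^ l ∣ p i ^ n i := hcop.dvd_of_dvd_mul_right h2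
  rw [← addOrderOf_dvd_iff_nsmul_eq_zero, hal]
  exact h3

include hp hdist hcard in
lemma comp_inter {i j : Fin m} (hij : i ≠ j) {a : A}
    (hai : a ∈ primaryComponent A (p i)) (haj : a ∈ primaryComponent A (p j)) : a = 0 := by
  have h1 : addOrderOf a ∣ p i ^ n i :=
    addOrderOf_dvd_of_nsmul_eq_zero (comp_tors hp hdist hcard hai)
  have h2 : addOrderOf a ∣ p j ^ n j :=
    addOrderOf_dvd_of_nsmul_eq_zero (comp_tors hp hdist hcard haj)
  have hcop : Nat.Coprime (p i ^ n i) (p j ^ n j) :=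
    Nat.Coprime.pow _ _ ((Nat.coprime_primes (hp i) (hp j)).mpr (fun e => hij (hdist e)))
  have h3 : addOrderOf a ∣ 1 := hcop ▸ Nat.dvd_gcd h1 h2
  exact AddMonoid.addOrderOf_eq_one_iff.mp (Nat.dvd_one.mp h3)

end Tors

section Nilp
variable {A : Type} [Fintype A] [AddCommGroup A] [Group A] [LeftBrace A]
variable {m : ℕ} {p n : Fin m → ℕ} (hp : ∀ i, (p i).Prime) (hdist : Function.Injective p)
  (hcard : Fintype.card A = ∏ i, p i ^ n i)

lemma compMul_isPGroup (q : ℕ) [Fact q.Prime] : IsPGroup q (compMul A q) := by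
  have hmul : IsPGroup q (Multiplicative (compAdd A q)) := by
    intro g
    obtain ⟨k, hk⟩ := (compAdd_mem_iff A q _).mp (Multiplicative.toAdd g).2
    refine ⟨k, ?_⟩
    have : (g ^ q ^ k).toAdd = q ^ k • g.toAdd := toAdd_pow g (q ^ k)
    apply Multiplicative.toAdd.injective
    rw [this]
    ext
    simpa using hk
  obtain ⟨k, hk⟩ := IsPGroup.iff_card.mp hmul
  apply IsPGroup.iff_card.mpr
  refine ⟨k, ?_⟩
  rw [← hk]
  have : Nat.card (Multiplicative (compAdd A q)) = Nat.card (compAdd A q) := rfl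
  rw [this]
  exact Nat.card_congr (Equiv.subtypeEquivRight (fun a =>
    (show a ∈ compMul A q ↔ a ∈ primaryComponent A q from Iff.rfl).trans
      (compAdd_mem_iff A q a).symm))

include hp hdist in
lemma comp_commute (hnil : Group.IsNilpotent A) {i j : Fin m} (hij : i ≠ j)
    {x y : A} (hx : x ∈ primaryComponent A (p i)) (hy : y ∈ primaryComponent A (p j)) :
    Commute x y := by
  haveI : Fact (p i).Prime := ⟨hp i⟩
  haveI : Fact (p j).Prime := ⟨hp j⟩
  haveI : Group.IsNilpotent A := hnil
  obtain ⟨P, hP⟩ := (compMul_isPGroup (A := A) (p i)).exists_le_sylow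
  obtain ⟨Q, hQ⟩ := (compMul_isPGroup (A := A) (p j)).exists_le_sylow
  have hPn : (P : Subgroup A).Normal :=
    Sylow.normal_of_normalizerCondition (normalizerCondition_of_isNilpotent) P
  have hQn : (Q : Subgroup A).Normal :=
    Sylow.normal_of_normalizerCondition (normalizerCondition_of_isNilpotent) Q
  have hpij : p i ≠ p j := fun e => hij (hdist e)
  have hdisj : Disjoint (P : Subgroup A) (Q : Subgroup A) :=
    IsPGroup.disjoint_of_ne (p i) (p j) hpij _ _ P.isPGroup' Q.isPGroup'
  exact Subgroup.commute_of_normal_of_disjoint _ _ hPn hQn hdisj x y (hP hx) (hQ hy)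

include hp hdist hcard in
lemma lam_fix (hnil : Group.IsNilpotent A) {i j : Fin m} (hij : i ≠ j)
    {x y : A} (hx : x ∈ primaryComponent A (p i)) (hy : y ∈ primaryComponent A (p j)) :
    lamE x y = y := by
  have hc : x * y = y * x := comp_commute hp hdist hnil hij hx hy
  rw [mul_eq_add_lamE x y, mul_eq_add_lamE y x] at hc
  have key : x - lamE y x = y - lamE x y := by
    rw [sub_eq_sub_iff_add_eq_add]
    exact hc
  have h1 : x - lamE y x ∈ primaryComponent A (p i) :=
    mem_comp_sub hx (mem_comp_map (lamE y) hx)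
  have h2 : y - lamE x y ∈ primaryComponent A (p j) :=
    mem_comp_sub hy (mem_comp_map (lamE x) hy)
  have h0 : y - lamE x y = 0 := comp_inter hp hdist hcard hij (key ▸ h1) h2
  have := sub_eq_zero.mp h0
  exact this.symm

include hp hdist hcard in
lemma single_mul_sum (hnil : Group.IsNilpotent A) {k : Fin m} {y : A}
    (hy : y ∈ primaryComponent A (p k)) (s : Finset (Fin m)) (hk : k ∉ s)
    (x : Fin m → A) (hx : ∀ j, x j ∈ primaryComponent A (p j)) :
    y * (∑ j ∈ s, x j) = y + ∑ j ∈ s, x j := by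
  rw [mul_eq_add_lamE, map_sum]
  congr 1
  apply Finset.sum_congr rfl
  intro j hj
  exact lam_fix hp hdist hcard hnil (fun e => hk (by rw [e]; exact hj)) hy (hx j)

include hp hdist hcard in
lemma sum_mul_single (hnil : Group.IsNilpotent A) (s : Finset (Fin m))
    (x : Fin m → A) (hx : ∀ j, x j ∈ primaryComponent A (p j)) :
    ∀ k ∉ s, ∀ y ∈ primaryComponent A (p k),
      (∑ j ∈ s, x j) * y = ∑ j ∈ s, x j + y := by
  induction s using Finset.induction_on with
  | empty =>
    intro k _ y _
    simp [← LB.one_eq_zero]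
  | @insert i s' hns ih =>
    intro k hk y hy
    have hki : k ≠ i := fun e => hk (e ▸ Finset.mem_insert_self i s')
    have hks' : k ∉ s' := fun h => hk (Finset.mem_insert_of_mem h)
    rw [Finset.sum_insert hns]
    have h1 : x i + ∑ j ∈ s', x j = x i * ∑ j ∈ s', x j :=
      (single_mul_sum hp hdist hcard hnil (hx i) s' hns x hx).symm
    have h2 : ∑ j ∈ s', x j + y = ∑ j ∈ insert k s', Function.update x k y j := by
      rw [Finset.sum_insert hks', Function.update_self]
      rw [add_comm]
      congr 1
      apply Finset.sum_congr rfl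
      intro j hj
      exact (Function.update_of_ne (fun e : j = k => hks' (e ▸ hj)) y x).symm
    have hmem : ∀ j, Function.update x k y j ∈ primaryComponent A (p j) := by
      intro j
      by_cases hj : j = k
      · subst hj; rw [Function.update_self]; exact hy
      · rw [Function.update_of_ne hj]; exact hx j
    calc (x i + ∑ j ∈ s', x j) * y
        = (x i * ∑ j ∈ s', x j) * y := by rw [← h1]
      _ = x i * ((∑ j ∈ s', x j) * y) := mul_assoc _ _ _
      _ = x i * (∑ j ∈ s', x j + y) := by rw [ih k hks' y hy]
      _ = x i * (∑ j ∈ insert k s', Function.update x k y j) := by rw [h2]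
      _ = x i + ∑ j ∈ insert k s', Function.update x k y j :=
          single_mul_sum hp hdist hcard hnil (hx i) _
            (by simp [Finset.mem_insert, hki.symm, hns]) _ hmem
      _ = x i + (∑ j ∈ s', x j + y) := by rw [← h2]
      _ = x i + ∑ j ∈ s', x j + y := (add_assoc _ _ _).symm

end Nilp

section Proj
variable {A : Type} [Fintype A] [AddCommGroup A] [Group A] [LeftBrace A]
variable {m : ℕ} (p n : Fin m → ℕ)

def Mi (i : Fin m) : ℕ := ∏ j ∈ Finset.univ.erase i, p j ^ n j

def ci (i : Fin m) : ℤ := Nat.gcdB (p i ^ n i) (Mi p n i)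
def ui (i : Fin m) : ℤ := Nat.gcdA (p i ^ n i) (Mi p n i)

def proj (i : Fin m) (a : A) : A := ((Mi p n i : ℤ) * ci p n i) • a

variable (hp : ∀ i, (p i).Prime) (hdist : Function.Injective p)
  (hcard : Fintype.card A = ∏ i, p i ^ n i)

include hcard in
lemma card_eq (i : Fin m) : Fintype.card A = p i ^ n i * Mi p n i := by
  rw [hcard, ← Finset.mul_prod_erase Finset.univ _ (Finset.mem_univ i)]
  rfl

include hp hdist in
lemma cop (i : Fin m) : Nat.Coprime (p i ^ n i) (Mi p n i) := by
  apply Nat.Coprime.pow_left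
  apply Nat.Coprime.prod_right
  intro j hj
  apply Nat.Coprime.pow_right
  exact (Nat.coprime_primes (hp i) (hp j)).mpr
    (fun e => (Finset.mem_erase.mp hj).1 (hdist e).symm)

include hp hdist in
lemma bezout (i : Fin m) :
    (1 : ℤ) = (p i ^ n i : ℤ) * ui p n i + (Mi p n i : ℤ) * ci p n i := by
  have h := Nat.gcd_eq_gcd_ab (p i ^ n i) (Mi p n i)
  rw [Nat.Coprime.gcd_eq_one (cop p n hp hdist i)] at h
  simpa [ui, ci] using h

include hcard in
lemma proj_mem (i : Fin m) (a : A) : proj p n i a ∈ primaryComponent A (p i) := by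
  refine ⟨n i, ?_⟩
  show (p i ^ n i) • (((Mi p n i : ℤ) * ci p n i) • a) = 0
  rw [← natCast_zsmul, smul_smul]
  have h : ((p i ^ n i : ℕ) : ℤ) * ((Mi p n i : ℤ) * ci p n i)
      = ci p n i * ((p i ^ n i * Mi p n i : ℕ) : ℤ) := by push_cast; ring
  rw [h, mul_smul, natCast_zsmul, ← card_eq p n hcard i, card_nsmul_eq_zero, smul_zero]

include hp hdist hcard in
lemma proj_self (i : Fin m) {a : A} (ha : a ∈ primaryComponent A (p i)) :
    proj p n i a = a := by
  show ((Mi p n i : ℤ) * ci p n i) • a = a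
  have h : (Mi p n i : ℤ) * ci p n i = 1 - (p i ^ n i : ℤ) * ui p n i := by
    rw [bezout p n hp hdist i]; ring
  rw [h, sub_smul, one_smul, mul_comm, mul_smul]
  have : ((p i ^ n i : ℕ) : ℤ) • a = 0 := by
    rw [natCast_zsmul]
    exact comp_tors hp hdist hcard ha
  push_cast at this
  rw [this, smul_zero, sub_zero]

include hp hdist hcard in
lemma proj_other {i j : Fin m} (hji : j ≠ i) {a : A}
    (ha : a ∈ primaryComponent A (p j)) : proj p n i a = 0 := by
  have hdvd : p j ^ n j ∣ Mi p n i :=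
    Finset.dvd_prod_of_mem _ (Finset.mem_erase.mpr ⟨hji, Finset.mem_univ j⟩)
  obtain ⟨t, ht⟩ := hdvd
  show ((Mi p n i : ℤ) * ci p n i) • a = 0
  have h : (Mi p n i : ℤ) * ci p n i = (ci p n i * t) * ((p j ^ n j : ℕ) : ℤ) := by
    rw [ht]; push_cast; ring
  rw [h, mul_smul, natCast_zsmul, comp_tors hp hdist hcard ha, smul_zero]

lemma proj_add (i : Fin m) (a b : A) :
    proj p n i (a + b) = proj p n i a + proj p n i b := smul_add _ a b

include hp hdist hcard in
lemma sum_proj (a : A) : ∑ i, proj p n i a = a := by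
  set d := a - ∑ i, proj p n i a with hd
  have hproj : ∀ k, proj p n k d = 0 := by
    intro k
    have h1 : proj p n k d = proj p n k a - ∑ i, proj p n k (proj p n i a) := by
      rw [hd]
      show _ • (a - ∑ i, proj p n i a) = _
      rw [smul_sub, Finset.smul_sum]
      rfl
    have h2 : ∑ i, proj p n k (proj p n i a) = proj p n k a := by
      rw [Finset.sum_eq_single k]
      · exact proj_self p n hp hdist hcard k (proj_mem p n hcard k a)
      · intro i _ hik
        exact proj_other p n hp hdist hcard hik (proj_mem p n hcard i a)
      · intro h; exact absurd (Finset.mem_univ k) h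
    rw [h1, h2, sub_self]
  have step : ∀ k, ((p k ^ n k : ℤ) * ui p n k) • d = d := by
    intro k
    have e1 : ((p k ^ n k : ℤ) * ui p n k + (Mi p n k : ℤ) * ci p n k) • d = d := by
      rw [← bezout p n hp hdist k, one_smul]
    have e2 : ((Mi p n k : ℤ) * ci p n k) • d = 0 := hproj k
    rw [add_smul, e2, add_zero] at e1
    exact e1
  have main : ∀ s : Finset (Fin m),
      (∏ k ∈ s, ((p k ^ n k : ℤ) * ui p n k)) • d = d := by
    intro s
    induction s using Finset.induction_on with
    | empty => simp
    | @insert i s' hi ih =>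
      rw [Finset.prod_insert hi, mul_smul, ih, step i]
  have hprod : ∏ k, ((p k ^ n k : ℤ) * ui p n k)
      = ((Fintype.card A : ℕ) : ℤ) * ∏ k, ui p n k := by
    rw [Finset.prod_mul_distrib, hcard]
    push_cast
    ring
  have hd0 : d = 0 := by
    have := (main Finset.univ).symm
    rw [hprod, mul_comm, mul_smul, natCast_zsmul, card_nsmul_eq_zero, smul_zero] at this
    exact this
  rw [hd] at hd0
  exact (eq_of_sub_eq_zero hd0).symm

include hp hdist hcard in
lemma proj_mul (hnil : Group.IsNilpotent A) (k : Fin m) (a b : A) :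
    proj p n k (a * b) = proj p n k a * proj p n k b := by
  have hmemr : ∀ j, proj p n j a ∈ primaryComponent A (p j) :=
    fun j => proj_mem p n hcard j a
  have hu : a = proj p n k a * (∑ j ∈ Finset.univ.erase k, proj p n j a) := by
    rw [single_mul_sum hp hdist hcard hnil (proj_mem p n hcard k a) _
      (Finset.notMem_erase k _) _ hmemr]
    have e := Finset.add_sum_erase Finset.univ (fun j => proj p n j a) (Finset.mem_univ k)
    exact (e.trans (sum_proj p n hp hdist hcard a)).symm
  have h1 : proj p n k (a * b) = proj p n k a + lamE a (proj p n k b) := by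
    rw [mul_eq_add_lamE a b]
    show ((Mi p n k : ℤ) * ci p n k) • (a + lamE a b) = _
    rw [smul_add]
    congr 1
    show ((Mi p n k : ℤ) * ci p n k) • (lamE a b) = lamE a (proj p n k b)
    exact (map_zsmul (lamE a) _ b).symm
  have h2 : lamE a (proj p n k b) = lamE (proj p n k a) (proj p n k b) := by
    conv_lhs => rw [hu]
    rw [lamE_mul]
    congr 1
    have h3 := sum_mul_single hp hdist hcard hnil (Finset.univ.erase k) _ hmemr k
      (Finset.notMem_erase k _) _ (proj_mem p n hcard k b)
    rw [mul_eq_add_lamE] at h3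
    exact add_left_cancel h3
  rw [h1, h2, ← mul_eq_add_lamE]

end Proj

/-- A finite left brace with nilpotent multiplicative group and
`|A| = p₁^{n₁} ⋯ p_m^{n_m}` is the direct product (as a left brace) of the Sylow
subgroups of its additive group, each of which is a sub-left-brace. -/
theorem stmt3 {A : Type} [Fintype A] [AddCommGroup A] [Group A] [LeftBrace A]
    (hnil : Group.IsNilpotent A)
    (m : ℕ) (p n : Fin m → ℕ) (hp : ∀ i, (p i).Prime) (hdist : Function.Injective p)
    (hcard : Fintype.card A = ∏ i, p i ^ n i) :
    (∀ i, ∃ (Sa : AddSubgroup A) (Sm : Subgroup A),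
        (Sa : Set A) = primaryComponent A (p i) ∧ (Sm : Set A) = primaryComponent A (p i)) ∧
    ∃ f : A ≃ ∀ i, ↥(primaryComponent A (p i)),
      (∀ a b : A, ∀ i, ((f (a + b) i : A)) = (f a i : A) + (f b i : A)) ∧
      (∀ a b : A, ∀ i, ((f (a * b) i : A)) = (f a i : A) * (f b i : A)) := by
  constructor
  · intro i
    exact ⟨compAdd A (p i), compMul A (p i), rfl, rfl⟩
  · refine ⟨⟨fun a i => ⟨proj p n i a, proj_mem p n hcard i a⟩,
      fun v => ∑ i, ((v i : A)), ?_, ?_⟩, ?_, ?_⟩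
    · intro a
      exact sum_proj p n hp hdist hcard a
    · intro v
      funext i
      apply Subtype.ext
      show proj p n i (∑ j, ((v j : A))) = (v i : A)
      have h1 : proj p n i (∑ j, ((v j : A))) = ∑ j, proj p n i ((v j : A)) := by
        show _ • _ = _
        rw [Finset.smul_sum]
        rfl
      rw [h1, Finset.sum_eq_single i]
      · exact proj_self p n hp hdist hcard i (v i).2
      · intro j _ hji
        exact proj_other p n hp hdist hcard hji (v j).2
      · intro h; exact absurd (Finset.mem_univ i) h
    · intro a b i
      exact proj_add p n i a b
    · intro a b i
      exact proj_mul p n hp hdist hcard hnil i a b
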